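/- Let R̂ > 0 and 0 < ξ < R̂ be real numbers, K > 0, and let F : ℂ → ℂ be an entire function such that for all k ∈ ℂ with |k| ≥ 1, |F(k) + R̂·cos(k(R̂−ξ)) + sin(k(R̂−ξ))/k| ≤ (K/|k|)·exp(|Im k|·(R̂−ξ)). Then for every θ ∈ [0, 2π], the Lindelöf indicator of F in the direction θ equals (R̂−ξ)·|sin θ|; that is, limsup_{r→∞} (log |F(r·e^{iθ})|)/r = (R̂−ξ)·|sin θ|. -/

import Mathlib

open Filter

lemma aux_norm_exp (z : ℂ) : ‖Complex.exp z‖ = Real.exp z.re := by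
  rw [Complex.norm_exp]

lemma aux_norm_cos_le (z : ℂ) : ‖Complex.cos z‖ ≤ Real.exp |z.im| := by
  have h1 : ‖Complex.exp (z * Complex.I)‖ = Real.exp (-z.im) := by
    rw [aux_norm_exp]; simp
  have h2 : ‖Complex.exp (-z * Complex.I)‖ = Real.exp z.im := by
    rw [aux_norm_exp]; simp
  have e1 : Real.exp (-z.im) ≤ Real.exp |z.im| := Real.exp_le_exp.2 (neg_le_abs _)
  have e2 : Real.exp z.im ≤ Real.exp |z.im| := Real.exp_le_exp.2 (le_abs_self _)
  have h3 : ‖(2:ℂ)‖ = 2 := by norm_num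
  rw [Complex.cos, norm_div, h3]
  have h4 := norm_add_le (Complex.exp (z * Complex.I)) (Complex.exp (-z * Complex.I))
  rw [h1, h2] at h4
  linarith

lemma aux_le_norm_cos (z : ℂ) : (Real.exp |z.im| - 1) / 2 ≤ ‖Complex.cos z‖ := by
  have h1 : ‖Complex.exp (z * Complex.I)‖ = Real.exp (-z.im) := by
    rw [aux_norm_exp]; simp
  have h2 : ‖Complex.exp (-z * Complex.I)‖ = Real.exp z.im := by
    rw [aux_norm_exp]; simp
  have h3 : ‖(2:ℂ)‖ = 2 := by norm_num
  rw [Complex.cos, norm_div, h3]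
  have key : ∀ u v : ℂ, ‖v‖ - ‖u‖ ≤ ‖u + v‖ := by
    intro u v
    have h := norm_sub_le (u + v) u
    rw [add_sub_cancel_left] at h
    linarith
  rcases le_total 0 z.im with h | h
  · have habs : |z.im| = z.im := abs_of_nonneg h
    have hk := key (Complex.exp (z * Complex.I)) (Complex.exp (-z * Complex.I))
    rw [h1, h2] at hk
    have hle1 : Real.exp (-z.im) ≤ 1 := Real.exp_le_one_iff.2 (by linarith)
    rw [habs]; linarith
  · have habs : |z.im| = -z.im := abs_of_nonpos h
    have hk' : ∀ u v : ℂ, ‖u‖ - ‖v‖ ≤ ‖u + v‖ := by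
      intro u v; have := key v u; rwa [add_comm] at this
    have hk := hk' (Complex.exp (z * Complex.I)) (Complex.exp (-z * Complex.I))
    rw [h1, h2] at hk
    have hle1 : Real.exp z.im ≤ 1 := Real.exp_le_one_iff.2 h
    rw [habs]; linarith

lemma aux_norm_sin_le (z : ℂ) : ‖Complex.sin z‖ ≤ Real.exp |z.im| := by
  have h1 : ‖Complex.exp (z * Complex.I)‖ = Real.exp (-z.im) := by
    rw [aux_norm_exp]; simp
  have h2 : ‖Complex.exp (-z * Complex.I)‖ = Real.exp z.im := by
    rw [aux_norm_exp]; simp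
  have e1 : Real.exp (-z.im) ≤ Real.exp |z.im| := Real.exp_le_exp.2 (neg_le_abs _)
  have e2 : Real.exp z.im ≤ Real.exp |z.im| := Real.exp_le_exp.2 (le_abs_self _)
  have h3 : ‖(2:ℂ)‖ = 2 := by norm_num
  rw [Complex.sin, norm_div, norm_mul, Complex.norm_I, mul_one, h3]
  have h4 := norm_sub_le (Complex.exp (-z * Complex.I)) (Complex.exp (z * Complex.I))
  rw [h1, h2] at h4
  linarith

/-- **(3.6).** The Lindelöf indicator of an entire function `F` satisfying the asymptotic
estimate (3.4) equals `(R̂ − ξ)|sin θ|` in every direction `θ ∈ [0, 2π]`. -/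
theorem lindelof_indicator
    (Rhat ξ K : ℝ) (hR : 0 < Rhat) (hξ0 : 0 < ξ) (hξR : ξ < Rhat) (hK : 0 < K)
    (F : ℂ → ℂ) (hF : Differentiable ℂ F)
    (hasym : ∀ k : ℂ, 1 ≤ ‖k‖ →
      ‖F k + (Rhat : ℂ) * Complex.cos (k * (Rhat - ξ)) + Complex.sin (k * (Rhat - ξ)) / k‖
        ≤ (K / ‖k‖) * Real.exp (|k.im| * (Rhat - ξ))) :
    ∀ θ ∈ Set.Icc (0 : ℝ) (2 * Real.pi),
      limsup (fun r : ℝ =>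
          Real.log ‖F ((r : ℂ) * Complex.exp (θ * Complex.I))‖ / r) atTop
        = (Rhat - ξ) * |Real.sin θ| := by
  intro θ hθ
  have ha0 : (0:ℝ) < Rhat - ξ := sub_pos.2 hξR
  set a : ℝ := Rhat - ξ with ha
  set s : ℝ := |Real.sin θ| with hs
  have hs0 : 0 ≤ s := abs_nonneg _
  set c : ℂ := Complex.exp ((θ:ℂ) * Complex.I) with hc
  set L : ℝ := a * s with hL
  have hL0 : 0 ≤ L := mul_nonneg ha0.le hs0
  set g : ℝ → ℝ := fun r : ℝ => Real.log ‖F ((r : ℂ) * c)‖ / r with hg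
  set C : ℝ := Rhat + 1 + K with hCdef
  clear_value a s c L g C
  have hC1 : (1:ℝ) ≤ C := by rw [hCdef]; linarith
  have hC0 : (0:ℝ) < C := lt_of_lt_of_le one_pos hC1
  have hcnorm : ‖c‖ = 1 := by
    rw [hc, Complex.norm_exp_ofReal_mul_I]
  have hkim : ∀ r : ℝ, ((r:ℂ) * c).im = r * Real.sin θ := by
    intro r
    rw [hc]
    simp [Complex.mul_im, Complex.exp_ofReal_mul_I_im, Complex.exp_ofReal_mul_I_re]
  have hknorm : ∀ r : ℝ, 0 ≤ r → ‖(r:ℂ) * c‖ = r := by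
    intro r hr
    rw [norm_mul, hcnorm, mul_one, Complex.norm_real, Real.norm_eq_abs, abs_of_nonneg hr]
  have haC : ((Rhat:ℂ) - (ξ:ℂ)) = (a:ℂ) := by rw [ha]; push_cast; ring
  have hzim : ∀ r : ℝ, 0 ≤ r → |(((r:ℂ) * c) * ((Rhat:ℂ) - (ξ:ℂ))).im| = L * r := by
    intro r hr
    rw [haC]
    have h1 : (((r:ℂ) * c) * (a:ℂ)).im = (r * Real.sin θ) * a := by
      rw [Complex.mul_im]
      simp [hkim r]
    rw [h1, abs_mul, abs_mul, abs_of_nonneg hr, abs_of_nonneg ha0.le, hL, hs]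
    ring
  -- key two-sided pointwise estimate
  have key : ∀ r : ℝ, 1 ≤ r →
      ‖F ((r:ℂ) * c)‖ ≤ C * Real.exp (L * r) ∧
      Rhat * ((Real.exp (L * r) - 1) / 2) - (1 + K) / r * Real.exp (L * r)
        ≤ ‖F ((r:ℂ) * c)‖ := by
    intro r hr1
    have hr0 : (0:ℝ) < r := lt_of_lt_of_le one_pos hr1
    set k : ℂ := (r:ℂ) * c with hk
    have hnk : ‖k‖ = r := hknorm r hr0.le
    have hk1 : (1:ℝ) ≤ ‖k‖ := by rw [hnk]; exact hr1
    have herr := hasym k hk1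
    set E : ℝ := Real.exp (L * r) with hE
    have hE0 : (0:ℝ) < E := Real.exp_pos _
    set A : ℂ := (Rhat:ℂ) * Complex.cos (k * ((Rhat:ℂ) - (ξ:ℂ))) with hA
    set B : ℂ := Complex.sin (k * ((Rhat:ℂ) - (ξ:ℂ))) / k with hB
    clear_value k E A B
    have hkima : |k.im| * a = L * r := by
      rw [hk, hkim r, abs_mul, abs_of_nonneg hr0.le, hL, hs]; ring
    have herr' : ‖F k + A + B‖ ≤ K / r * E := by
      calc ‖F k + A + B‖ ≤ K / ‖k‖ * Real.exp (|k.im| * a) := herr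
        _ = K / r * E := by rw [hnk, hkima, hE]
    have hzE : Real.exp |(k * ((Rhat:ℂ) - (ξ:ℂ))).im| = E := by
      rw [hk, hzim r hr0.le, hE]
    have hAle : ‖A‖ ≤ Rhat * E := by
      rw [hA, norm_mul, Complex.norm_real, Real.norm_eq_abs, abs_of_pos hR]
      have := aux_norm_cos_le (k * ((Rhat:ℂ) - (ξ:ℂ)))
      rw [hzE] at this
      exact mul_le_mul_of_nonneg_left this hR.le
    have hAge : Rhat * ((E - 1) / 2) ≤ ‖A‖ := by
      rw [hA, norm_mul, Complex.norm_real, Real.norm_eq_abs, abs_of_pos hR]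
      have := aux_le_norm_cos (k * ((Rhat:ℂ) - (ξ:ℂ)))
      rw [hzE] at this
      exact mul_le_mul_of_nonneg_left this hR.le
    have hBle : ‖B‖ ≤ E / r := by
      rw [hB, norm_div, hnk]
      have := aux_norm_sin_le (k * ((Rhat:ℂ) - (ξ:ℂ)))
      rw [hzE] at this
      exact div_le_div_of_nonneg_right this hr0.le
    constructor
    · have heq : F k = (F k + A + B) - A - B := by ring
      have hub : ‖F k‖ ≤ ‖F k + A + B‖ + ‖A‖ + ‖B‖ := by
        calc ‖F k‖ = ‖(F k + A + B) - A - B‖ := by rw [← heq]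
          _ ≤ ‖(F k + A + B) - A‖ + ‖B‖ := norm_sub_le _ _
          _ ≤ ‖F k + A + B‖ + ‖A‖ + ‖B‖ := by
              have := norm_sub_le (F k + A + B) A; linarith
      have h1 : K / r * E ≤ K * E := by
        have : K / r ≤ K := div_le_self hK.le hr1
        exact mul_le_mul_of_nonneg_right this hE0.le
      have h2 : E / r ≤ E := div_le_self hE0.le hr1
      rw [hCdef]
      linarith
    · have heq2 : A + B = (F k + A + B) - F k := by ring
      have h5 : ‖A + B‖ ≤ ‖F k + A + B‖ + ‖F k‖ := by
        rw [heq2]; exact norm_sub_le _ _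
      have h6 : ‖A‖ - ‖B‖ ≤ ‖A + B‖ := by
        have : ‖A‖ ≤ ‖A + B‖ + ‖B‖ := by
          calc ‖A‖ = ‖(A + B) - B‖ := by congr 1; ring
            _ ≤ ‖A + B‖ + ‖B‖ := norm_sub_le _ _
        linarith
      have hsum : E / r + K / r * E = (1 + K) / r * E := by ring
      linarith
  -- eventual upper bound on g
  have hgub : ∀ r : ℝ, 1 ≤ r → g r ≤ L + Real.log C / r := by
    intro r hr1
    have hr0 : (0:ℝ) < r := lt_of_lt_of_le one_pos hr1
    have h := (key r hr1).1
    have hlogC : 0 ≤ Real.log C := Real.log_nonneg hC1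
    have hlog : Real.log ‖F ((r:ℂ) * c)‖ ≤ Real.log C + L * r := by
      rcases eq_or_lt_of_le (norm_nonneg (F ((r:ℂ) * c))) with h0 | h0
      · rw [← h0, Real.log_zero]
        linarith [mul_nonneg hL0 hr0.le]
      · calc Real.log ‖F ((r:ℂ) * c)‖ ≤ Real.log (C * Real.exp (L * r)) :=
              Real.log_le_log h0 h
          _ = Real.log C + L * r := by
              rw [Real.log_mul (ne_of_gt hC0) (Real.exp_ne_zero _), Real.log_exp]
    have h7 : Real.log ‖F ((r:ℂ) * c)‖ / r ≤ (Real.log C + L * r) / r :=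
      (div_le_div_iff_of_pos_right hr0).mpr hlog
    have h8 : (Real.log C + L * r) / r = Real.log C / r + L := by
      field_simp
    rw [hg]
    simp only []
    linarith [h7, h8.le, h8.ge]
  have hub_eps : ∀ ε : ℝ, 0 < ε → ∀ᶠ r in atTop, g r ≤ L + ε := by
    intro ε hε
    have h1 : Tendsto (fun r : ℝ => Real.log C / r) atTop (nhds 0) :=
      tendsto_const_nhds.div_atTop tendsto_id
    filter_upwards [eventually_ge_atTop 1, h1.eventually_le_const hε] with r h1r h2r
    exact (hgub r h1r).trans (by linarith)
  -- frequent lower bound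
  have hfreq : ∀ ε : ℝ, 0 < ε → ∃ᶠ r in atTop, L - ε ≤ g r := by
    intro ε hε
    rcases eq_or_lt_of_le hs0 with hs00 | hspos
    · -- s = 0 : real direction, subsequence r = nπ/a
      have hsin : Real.sin θ = 0 := abs_eq_zero.1 (hs.symm.trans hs00.symm)
      have hL0' : L = 0 := by rw [hL, ← hs00, mul_zero]
      have hcos : Real.cos θ = 1 ∨ Real.cos θ = -1 := by
        have h := Real.sin_sq_add_cos_sq θ
        rw [hsin] at h
        have h2 : Real.cos θ * Real.cos θ = 1 := by nlinarith
        exact mul_self_eq_one_iff.1 h2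
      have hceq : c = ((Real.cos θ : ℝ) : ℂ) := by
        rw [hc, Complex.exp_mul_I, ← Complex.ofReal_cos, ← Complex.ofReal_sin, hsin]
        simp
      rw [frequently_atTop]
      intro b
      have hπ : (0:ℝ) < Real.pi := Real.pi_pos
      obtain ⟨M, hMb, hM1, hMK, hMlog⟩ :
          ∃ M : ℝ, b ≤ M ∧ 1 ≤ M ∧ 2 * K / Rhat ≤ M ∧ |Real.log (Rhat / 2)| / ε ≤ M := by
        refine ⟨max b (max 1 (max (2 * K / Rhat) (|Real.log (Rhat / 2)| / ε))), ?_, ?_, ?_, ?_⟩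
        · exact le_max_left _ _
        · exact le_trans (le_max_left _ _) (le_max_right _ _)
        · exact le_trans (le_trans (le_max_left _ _) (le_max_right _ _)) (le_max_right _ _)
        · exact le_trans (le_trans (le_max_right _ _) (le_max_right _ _)) (le_max_right _ _)
      obtain ⟨n, hna⟩ : ∃ n : ℕ, M * a / Real.pi ≤ (n : ℝ) :=
        ⟨⌈M * a / Real.pi⌉₊, Nat.le_ceil _⟩
      obtain ⟨r, hr⟩ : ∃ r : ℝ, r = (n : ℝ) * Real.pi / a := ⟨_, rfl⟩
      have hrM : M ≤ r := by
        rw [hr]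
        calc M = (M * a / Real.pi) * Real.pi / a := by field_simp
          _ ≤ (n:ℝ) * Real.pi / a := by gcongr
      have hr1 : (1:ℝ) ≤ r := le_trans hM1 hrM
      have hr0 : (0:ℝ) < r := lt_of_lt_of_le one_pos hr1
      refine ⟨r, le_trans hMb hrM, ?_⟩
      have hnk : ‖(r:ℂ) * c‖ = r := hknorm r hr0.le
      have herr := hasym ((r:ℂ) * c) (by rw [hnk]; exact hr1)
      have hkim0 : ((r:ℂ) * c).im = 0 := by rw [hkim r, hsin, mul_zero]
      have hra : r * a = (n:ℝ) * Real.pi := by rw [hr]; field_simp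
      have hreq : r * Real.cos θ * a = Real.cos θ * ((n:ℝ) * Real.pi) := by
        rw [mul_comm r (Real.cos θ), mul_assoc, hra]
      have hzeq : ((r:ℂ) * c) * ((Rhat:ℂ) - (ξ:ℂ))
          = ((Real.cos θ * ((n:ℝ) * Real.pi) : ℝ) : ℂ) := by
        rw [haC, hceq]
        calc (r:ℂ) * (Real.cos θ:ℂ) * (a:ℂ) = ((r * Real.cos θ * a : ℝ) : ℂ) := by
              push_cast; ring
          _ = _ := by rw [hreq]
      have hcosval : |Real.cos (Real.cos θ * ((n:ℝ) * Real.pi))| = 1 := by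
        have hint : |Real.cos ((n:ℝ) * Real.pi)| = 1 := by
          have h := Real.abs_cos_int_mul_pi (n : ℤ)
          rwa [Int.cast_natCast] at h
        rcases hcos with h | h <;> rw [h]
        · rw [one_mul]; exact hint
        · rw [neg_one_mul, Real.cos_neg]; exact hint
      have hsinval : Real.sin (Real.cos θ * ((n:ℝ) * Real.pi)) = 0 := by
        have hint : Real.sin ((n:ℝ) * Real.pi) = 0 := by
          have h := Real.sin_int_mul_pi (n : ℤ)
          rwa [Int.cast_natCast] at h
        rcases hcos with h | h <;> rw [h]
        · rw [one_mul]; exact hint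
        · rw [neg_one_mul, Real.sin_neg, hint, neg_zero]
      set k : ℂ := (r:ℂ) * c with hk
      set A : ℂ := (Rhat:ℂ) * Complex.cos (k * ((Rhat:ℂ) - (ξ:ℂ))) with hA
      set B : ℂ := Complex.sin (k * ((Rhat:ℂ) - (ξ:ℂ))) / k with hB
      clear_value k A B
      have hAn : ‖A‖ = Rhat := by
        rw [hA, hzeq, ← Complex.ofReal_cos, norm_mul, Complex.norm_real,
          Complex.norm_real, Real.norm_eq_abs, Real.norm_eq_abs, hcosval,
          abs_of_pos hR, mul_one]
      have hBn : ‖B‖ = 0 := by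
        rw [hB, hzeq, ← Complex.ofReal_sin, hsinval]
        simp
      have herr2 : ‖F k + A + B‖ ≤ K / r := by
        calc ‖F k + A + B‖ ≤ K / ‖k‖ * Real.exp (|k.im| * a) := herr
          _ = K / r := by rw [hnk, hkim0, abs_zero, zero_mul, Real.exp_zero, mul_one]
      have h5 : ‖A + B‖ ≤ ‖F k + A + B‖ + ‖F k‖ := by
        calc ‖A + B‖ = ‖(F k + A + B) - F k‖ := by congr 1; ring
          _ ≤ ‖F k + A + B‖ + ‖F k‖ := norm_sub_le _ _
      have h6 : ‖A‖ - ‖B‖ ≤ ‖A + B‖ := by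
        have h7 : ‖A‖ ≤ ‖A + B‖ + ‖B‖ := by
          calc ‖A‖ = ‖(A + B) - B‖ := by congr 1; ring
            _ ≤ ‖A + B‖ + ‖B‖ := norm_sub_le _ _
        linarith
      have hKr : K / r ≤ Rhat / 2 := by
        rw [div_le_iff₀ hr0]
        have h8 : 2 * K / Rhat ≤ r := le_trans hMK hrM
        have h11 := mul_le_mul_of_nonneg_left h8 (by positivity : (0:ℝ) ≤ Rhat / 2)
        have h12 : Rhat / 2 * (2 * K / Rhat) = K := by field_simp
        linarith
      have hF2 : Rhat / 2 ≤ ‖F k‖ := by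
        rw [hAn, hBn] at h6
        linarith
      rw [hk] at hF2
      have hglb : Real.log (Rhat / 2) / r ≤ g r := by
        rw [hg]
        simp only []
        exact (div_le_div_iff_of_pos_right hr0).mpr (Real.log_le_log (by positivity) hF2)
      have hεr : |Real.log (Rhat / 2)| ≤ ε * r := by
        have h10 : |Real.log (Rhat / 2)| / ε ≤ r := le_trans hMlog hrM
        rw [div_le_iff₀ hε] at h10
        linarith [mul_comm r ε]
      have hneg : -ε ≤ Real.log (Rhat / 2) / r := by
        rw [le_div_iff₀ hr0]
        linarith [neg_abs_le (Real.log (Rhat / 2))]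
      rw [hL0']
      linarith
    · -- s > 0 : eventual lower bound
      apply Eventually.frequently
      have hLpos : 0 < L := by rw [hL]; exact mul_pos ha0 hspos
      filter_upwards [eventually_ge_atTop
        (max 1 (max (8 * (1 + K) / Rhat) (max (3 / L) (|Real.log (Rhat / 4)| / ε))))]
        with r hrr
      have hr1 : (1:ℝ) ≤ r := le_trans (le_max_left _ _) hrr
      have hr8 : 8 * (1 + K) / Rhat ≤ r :=
        le_trans (le_trans (le_max_left _ _) (le_max_right _ _)) hrr
      have hr3 : 3 / L ≤ r :=
        le_trans (le_trans (le_trans (le_max_left _ _) (le_max_right _ _))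
          (le_max_right _ _)) hrr
      have hrlog : |Real.log (Rhat / 4)| / ε ≤ r :=
        le_trans (le_trans (le_trans (le_max_right _ _) (le_max_right _ _))
          (le_max_right _ _)) hrr
      have hr0 : (0:ℝ) < r := lt_of_lt_of_le one_pos hr1
      have hE0 : (0:ℝ) < Real.exp (L * r) := Real.exp_pos _
      have hE4 : (4:ℝ) ≤ Real.exp (L * r) := by
        have h1 : 3 ≤ L * r := by
          rw [div_le_iff₀ hLpos] at hr3
          linarith [mul_comm r L]
        linarith [Real.add_one_le_exp (L * r)]
      have hlow := (key r hr1).2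
      have h1K : (1 + K) / r ≤ Rhat / 8 := by
        rw [div_le_iff₀ hr0]
        have h11 := mul_le_mul_of_nonneg_left hr8 (by positivity : (0:ℝ) ≤ Rhat / 8)
        have h12 : Rhat / 8 * (8 * (1 + K) / Rhat) = 1 + K := by field_simp
        linarith
      have hFlb : Rhat / 4 * Real.exp (L * r) ≤ ‖F ((r:ℂ) * c)‖ := by
        have h13 := mul_le_mul_of_nonneg_right h1K hE0.le
        have h14 := mul_le_mul_of_nonneg_left hE4 (by positivity : (0:ℝ) ≤ Rhat / 8)
        linarith
      have hlog2 : Real.log (Rhat / 4) + L * r ≤ Real.log ‖F ((r:ℂ) * c)‖ := by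
        have hpos : (0:ℝ) < Rhat / 4 * Real.exp (L * r) := by positivity
        have h2 := Real.log_le_log hpos hFlb
        rw [Real.log_mul (by positivity) (Real.exp_ne_zero _), Real.log_exp] at h2
        exact h2
      have h3 := (div_le_div_iff_of_pos_right hr0).mpr hlog2
      have h4 : (Real.log (Rhat / 4) + L * r) / r = Real.log (Rhat / 4) / r + L := by
        field_simp
      have hεr : |Real.log (Rhat / 4)| ≤ ε * r := by
        rw [div_le_iff₀ hε] at hrlog
        linarith [mul_comm r ε]
      have hneg : -ε ≤ Real.log (Rhat / 4) / r := by
        rw [le_div_iff₀ hr0]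
        linarith [neg_abs_le (Real.log (Rhat / 4))]
      rw [hg]
      simp only []
      linarith [h4.le, h4.ge]
  -- assemble
  have hbdd : IsBoundedUnder (· ≤ ·) atTop g := by
    refine ⟨L + 1, ?_⟩
    rw [eventually_map]
    exact hub_eps 1 one_pos
  have hcob : IsCoboundedUnder (· ≤ ·) atTop g :=
    IsCoboundedUnder.of_frequently_ge (hfreq 1 one_pos)
  apply le_antisymm
  · apply le_of_forall_pos_le_add
    intro ε hε
    exact limsup_le_of_le hcob (hub_eps ε hε)
  · apply le_of_forall_pos_le_add
    intro ε hε
    have h := le_limsup_of_frequently_le (hfreq ε hε) hbdd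
    linarith
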